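/- Let A = K[[f_1,…,f_s]] ⊆ F = K[[x_1,…,x_n]] with the length of F/A as an A-module finite. Then the set {in(A,a) : a ∈ (ℝ_{>0})^n} of subalgebras of F is finite. -/

import Mathlib

noncomputable section

namespace CanonicalFan

open MvPowerSeries

variable (K : Type*) [Field K] (n : ℕ)

/-- The weight `⟨a, α⟩ = ∑ i, a i * α i` of an exponent `α` with respect to `a`. -/
def weight (a : Fin n → ℝ) (α : Fin n →₀ ℕ) : ℝ := ∑ i, a i * (α i : ℝ)

/-- The support of a formal power series. -/
def supp (f : MvPowerSeries (Fin n) K) : Set (Fin n →₀ ℕ) :=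
  {α | MvPowerSeries.coeff α f ≠ 0}

/-- The `a`-valuation `ν(f,a)`, with the convention `ν(0,a) = +∞`. -/
def nu (a : Fin n → ℝ) (f : MvPowerSeries (Fin n) K) : EReal :=
  sInf ((fun α => ((weight n a α : ℝ) : EReal)) '' supp K n f)

open Classical in
/-- The `a`-initial form `in(f,a)` of a power series. -/
def initialForm (a : Fin n → ℝ) (f : MvPowerSeries (Fin n) K) :
    MvPowerSeries (Fin n) K :=
  fun α => if ((weight n a α : ℝ) : EReal) = nu K n a f then MvPowerSeries.coeff α f else 0

open Classical in
/-- `exp(f,a)`: the `≺`-maximal element of the support of `in(f,a)`, where `≺` is the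
well-ordering `r` (junk value `0` if no maximal element exists). -/
def exponent (r : (Fin n →₀ ℕ) → (Fin n →₀ ℕ) → Prop) (a : Fin n → ℝ)
    (f : MvPowerSeries (Fin n) K) : Fin n →₀ ℕ :=
  if h : ∃ β ∈ supp K n (initialForm K n a f),
      ∀ γ ∈ supp K n (initialForm K n a f), γ = β ∨ r γ β
  then h.choose else 0

/-- The `a`-leading monomial `M(f,a) = c_{exp(f,a)} x^{exp(f,a)}`. -/
def leadMon (r : (Fin n →₀ ℕ) → (Fin n →₀ ℕ) → Prop) (a : Fin n → ℝ)
    (f : MvPowerSeries (Fin n) K) : MvPowerSeries (Fin n) K :=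
  MvPowerSeries.monomial (exponent K n r a f)
    (MvPowerSeries.coeff (exponent K n r a f) f)

/-- The maximal ideal `(x_1, …, x_n)` of `K[[x_1,…,x_n]]`. -/
def mIdeal : Ideal (MvPowerSeries (Fin n) K) :=
  Ideal.span (Set.range (MvPowerSeries.X : Fin n → MvPowerSeries (Fin n) K))

/-- `K[[S]]`: the smallest `K`-subalgebra of `K[[x_1,…,x_n]]` containing `S` and closed in
the `(x_1,…,x_n)`-adic topology; concretely, the adic closure of `Algebra.adjoin K S`. -/
def closedAdjoin (S : Set (MvPowerSeries (Fin n) K)) :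
    Subalgebra K (MvPowerSeries (Fin n) K) where
  carrier := {f | ∀ N : ℕ, ∃ g ∈ Algebra.adjoin K S, f - g ∈ (mIdeal K n) ^ N}
  algebraMap_mem' c N :=
    ⟨algebraMap K _ c, Subalgebra.algebraMap_mem _ c, by simp [Ideal.zero_mem]⟩
  add_mem' {f g} hf hg N := by
    obtain ⟨p, hp, hfp⟩ := hf N
    obtain ⟨q, hq, hgq⟩ := hg N
    exact ⟨p + q, add_mem hp hq, by simpa [add_sub_add_comm] using Ideal.add_mem _ hfp hgq⟩
  mul_mem' {f g} hf hg N := by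
    obtain ⟨p, hp, hfp⟩ := hf N
    obtain ⟨q, hq, hgq⟩ := hg N
    refine ⟨p * q, mul_mem hp hq, ?_⟩
    have h : f * g - p * q = f * (g - q) + (f - p) * q := by ring
    rw [h]
    exact Ideal.add_mem _ (Ideal.mul_mem_left _ _ hgq) (Ideal.mul_mem_right _ _ hfp)

/-- `exp(A,a) = {exp(f,a) : f ∈ A, f ≠ 0}`. -/
def expSet (r : (Fin n →₀ ℕ) → (Fin n →₀ ℕ) → Prop) (a : Fin n → ℝ)
    (A : Set (MvPowerSeries (Fin n) K)) : Set (Fin n →₀ ℕ) :=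
  {β | ∃ f ∈ A, f ≠ 0 ∧ exponent K n r a f = β}

/-- `in(A,a) = K[[in(f,a) : f ∈ A ∖ {0}]]`. -/
def inAlgebra (a : Fin n → ℝ) (A : Set (MvPowerSeries (Fin n) K)) :
    Subalgebra K (MvPowerSeries (Fin n) K) :=
  closedAdjoin K n {g | ∃ f ∈ A, f ≠ 0 ∧ initialForm K n a f = g}

/-- `M(A,a) = K[[M(f,a) : f ∈ A ∖ {0}]]`. -/
def leadAlgebra (r : (Fin n →₀ ℕ) → (Fin n →₀ ℕ) → Prop) (a : Fin n → ℝ)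
    (A : Set (MvPowerSeries (Fin n) K)) : Subalgebra K (MvPowerSeries (Fin n) K) :=
  closedAdjoin K n {g | ∃ f ∈ A, f ≠ 0 ∧ leadMon K n r a f = g}

set_option synthInstance.maxHeartbeats 1000000 in
/-- The length of `F/A` as an `A`-module is finite. -/
def FiniteColength (A : Subalgebra K (MvPowerSeries (Fin n) K)) : Prop :=
  IsFiniteLength A
    (MvPowerSeries (Fin n) K ⧸ LinearMap.range (Algebra.linearMap A (MvPowerSeries (Fin n) K)))

/-- `{g_1,…,g_r}` is an `a`-canonical basis of `A`. -/
def IsCanonicalBasis (r : (Fin n →₀ ℕ) → (Fin n →₀ ℕ) → Prop) (a : Fin n → ℝ)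
    (A : Subalgebra K (MvPowerSeries (Fin n) K)) {m : ℕ}
    (g : Fin m → MvPowerSeries (Fin n) K) : Prop :=
  (∀ i, g i ∈ A ∧ g i ≠ 0) ∧
    leadAlgebra K n r a (A : Set (MvPowerSeries (Fin n) K)) =
      closedAdjoin K n (Set.range fun i => leadMon K n r a (g i))

/-- `{g_1,…,g_r}` is a minimal `a`-canonical basis of `A`. -/
def IsMinimalCanonicalBasis (r : (Fin n →₀ ℕ) → (Fin n →₀ ℕ) → Prop) (a : Fin n → ℝ)
    (A : Subalgebra K (MvPowerSeries (Fin n) K)) {m : ℕ}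
    (g : Fin m → MvPowerSeries (Fin n) K) : Prop :=
  IsCanonicalBasis K n r a A g ∧
    ∀ T : Set (MvPowerSeries (Fin n) K),
      T ⊂ Set.range (fun i => leadMon K n r a (g i)) →
        closedAdjoin K n T ≠ leadAlgebra K n r a (A : Set (MvPowerSeries (Fin n) K))

/-- `{g_1,…,g_r}` is the `a`-reduced canonical basis of `A`. -/
def IsReducedCanonicalBasis (r : (Fin n →₀ ℕ) → (Fin n →₀ ℕ) → Prop) (a : Fin n → ℝ)
    (A : Subalgebra K (MvPowerSeries (Fin n) K)) {m : ℕ}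
    (g : Fin m → MvPowerSeries (Fin n) K) : Prop :=
  IsMinimalCanonicalBasis K n r a A g ∧
    (∀ i, MvPowerSeries.coeff (exponent K n r a (g i)) (g i) = 1) ∧
    ∀ i, ∀ α ∈ supp K n (g i - leadMon K n r a (g i)),
      (MvPowerSeries.monomial α (1 : K)) ∉
        closedAdjoin K n (Set.range fun j => leadMon K n r a (g j))

/-- A power series is a (nonzero) monomial. -/
def IsMonomial (g : MvPowerSeries (Fin n) K) : Prop :=
  ∃ (α : Fin n →₀ ℕ) (c : K), c ≠ 0 ∧ g = MvPowerSeries.monomial α c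

def deg {n : ℕ} (α : Fin n →₀ ℕ) : ℕ := ∑ i, α i

variable {n}

lemma apply_le_deg (α : Fin n →₀ ℕ) (i : Fin n) : α i ≤ deg α :=
  Finset.single_le_sum (fun _ _ => Nat.zero_le _) (Finset.mem_univ i)

lemma deg_add (α β : Fin n →₀ ℕ) : deg (α + β) = deg α + deg β := by
  simp [deg, Finsupp.add_apply, Finset.sum_add_distrib]

lemma deg_single_one (i : Fin n) : deg (Finsupp.single i (1:ℕ)) = 1 := by
  classical
  simp [deg, Finsupp.single_apply]

lemma deg_eq_zero_of_lt_one {α : Fin n →₀ ℕ} (h : deg α < 1) : α = 0 := by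
  ext i
  simp only [Finsupp.coe_zero, Pi.zero_apply]
  have := apply_le_deg α i; omega

lemma exists_finset_deg_lt (n M : ℕ) : ∃ T : Finset (Fin n →₀ ℕ), ∀ α, deg α < M → α ∈ T := by
  refine ⟨Finset.univ.image
    (fun v : Fin n → Fin (M+1) => Finsupp.equivFunOnFinite.symm fun i => ((v i : ℕ))), ?_⟩
  intro α h
  have hb : ∀ i, α i < M + 1 := fun i => by
    have := apply_le_deg α i; omega
  refine Finset.mem_image.2 ⟨fun i => ⟨α i, hb i⟩,
    Finset.mem_univ _, ?_⟩
  simp only []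
  exact Finsupp.equivFunOnFinite_symm_coe α

variable (n) in
def Iord (M : ℕ) : Ideal (MvPowerSeries (Fin n) K) where
  carrier := {f | ∀ α, deg α < M → MvPowerSeries.coeff α f = 0}
  zero_mem' := fun α _ => map_zero _
  add_mem' := fun hf hg α hα => by rw [map_add, hf α hα, hg α hα, add_zero]
  smul_mem' := fun c f hf α hα => by
    classical
    rw [smul_eq_mul, coeff_mul]
    apply Finset.sum_eq_zero
    intro p hp
    have h1 : p.1 + p.2 = α := Finset.HasAntidiagonal.mem_antidiagonal.1 hp
    have : deg p.2 < M := by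
      have := deg_add p.1 p.2
      rw [h1] at this
      omega
    rw [hf p.2 this, mul_zero]

lemma mem_Iord {M : ℕ} {f : MvPowerSeries (Fin n) K} :
    f ∈ Iord K n M ↔ ∀ α, deg α < M → MvPowerSeries.coeff α f = 0 := Iff.rfl

lemma X_mem_mIdeal (i : Fin n) : (X i : MvPowerSeries (Fin n) K) ∈ mIdeal K n :=
  Ideal.subset_span ⟨i, rfl⟩

lemma mIdeal_le_Iord_one : mIdeal K n ≤ Iord K n 1 := by
  rw [mIdeal, Ideal.span_le]
  rintro _ ⟨i, rfl⟩
  rw [SetLike.mem_coe, mem_Iord]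
  intro α hα
  rw [deg_eq_zero_of_lt_one hα, coeff_zero_eq_constantCoeff_apply, constantCoeff_X]

lemma Iord_mul_le (a b : ℕ) : Iord K n a * Iord K n b ≤ Iord K n (a + b) := by
  rw [Ideal.mul_le]
  intro r hr s hs
  rw [mem_Iord]
  intro α hα
  classical
  rw [coeff_mul]
  apply Finset.sum_eq_zero
  intro p hp
  have h1 : p.1 + p.2 = α := Finset.HasAntidiagonal.mem_antidiagonal.1 hp
  have hd : deg p.1 + deg p.2 < a + b := by rw [← deg_add, h1]; exact hα
  rcases lt_or_ge (deg p.1) a with h | h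
  · rw [hr p.1 h, zero_mul]
  · rw [hs p.2 (by omega), mul_zero]

lemma mIdeal_pow_le_Iord (M : ℕ) : (mIdeal K n) ^ M ≤ Iord K n M := by
  induction M with
  | zero => intro f _; rw [mem_Iord]; intro α hα; omega
  | succ M ih =>
    rw [pow_succ]
    calc (mIdeal K n) ^ M * mIdeal K n ≤ Iord K n M * Iord K n 1 :=
          Ideal.mul_mono ih (mIdeal_le_Iord_one K)
      _ ≤ Iord K n (M + 1) := Iord_mul_le K M 1


lemma Iord_le_mIdeal_pow (M : ℕ) : Iord K n M ≤ (mIdeal K n) ^ M := by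
  classical
  induction M with
  | zero => rw [pow_zero, Ideal.one_eq_top]; exact le_top
  | succ M ih =>
    intro f hf
    set g : Fin n → MvPowerSeries (Fin n) K := fun i α =>
      if ∀ j, j < i → α j = 0 then MvPowerSeries.coeff (α + Finsupp.single i 1) f else 0
      with hg
    have hgc : ∀ i α, MvPowerSeries.coeff α (g i) =
        if ∀ j, j < i → α j = 0 then MvPowerSeries.coeff (α + Finsupp.single i 1) f else 0 :=
      fun i α => rfl
    have hgI : ∀ i, g i ∈ Iord K n M := by
      intro i α hα
      rw [hgc]
      split
      · exact hf _ (by rw [deg_add, deg_single_one]; omega)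
      · rfl
    have hfeq : f = ∑ i, X i * g i := by
      ext β
      rw [map_sum]
      have hco : ∀ i, MvPowerSeries.coeff β (X i * g i) =
          if Finsupp.single i 1 ≤ β then
            MvPowerSeries.coeff (β - Finsupp.single i 1) (g i) else 0 := by
        intro i
        rw [X_def, coeff_monomial_mul]
        simp
      by_cases hβ : β = 0
      · subst hβ
        rw [Finset.sum_eq_zero, hf 0 (by simp [deg])]
        intro i _
        rw [hco, if_neg]
        intro hle
        have := hle i
        simp [Finsupp.single_apply] at this
      · have hsupp : β.support.Nonempty := Finsupp.support_nonempty_iff.2 hβ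
        set i₀ := β.support.min' hsupp with hi₀
        have hi₀mem : i₀ ∈ β.support := β.support.min'_mem hsupp
        have hβi₀ : β i₀ ≠ 0 := Finsupp.mem_support_iff.1 hi₀mem
        have hmin : ∀ j ∈ β.support, i₀ ≤ j := fun j hj => β.support.min'_le j hj
        rw [Finset.sum_eq_single i₀]
        · rw [hco, if_pos (Finsupp.single_le_iff.2 (Nat.one_le_iff_ne_zero.2 hβi₀)), hgc,
            if_pos, tsub_add_cancel_of_le (Finsupp.single_le_iff.2 (Nat.one_le_iff_ne_zero.2 hβi₀))]
          intro j hj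
          have hjns : j ∉ β.support := fun hmem => absurd (hmin j hmem) (by omega)
          have hβj : β j = 0 := Finsupp.notMem_support_iff.1 hjns
          rw [Finsupp.tsub_apply, hβj]
          simp
        · intro i _ hne
          rw [hco]
          split
          · next hle =>
            have h1 : (1:ℕ) ≤ β i := Finsupp.single_le_iff.1 hle
            have hii : i₀ < i := by
              rcases lt_or_ge i i₀ with h | h
              · exfalso
                have : i ∈ β.support := Finsupp.mem_support_iff.2 (by omega)
                exact absurd (hmin i this) (by omega)
              · exact lt_of_le_of_ne h (Ne.symm hne)
            rw [hgc, if_neg]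
            intro hall
            have := hall i₀ hii
            rw [Finsupp.tsub_apply, Finsupp.single_apply, if_neg hne] at this
            exact hβi₀ (by omega)
          · rfl
        · intro h
          exact absurd (Finset.mem_univ i₀) h
    have : ∀ i, X i * g i ∈ (mIdeal K n) ^ (M + 1) := by
      intro i
      rw [pow_succ']
      exact Ideal.mul_mem_mul (X_mem_mIdeal K i) (ih (hgI i))
    rw [hfeq]
    exact Ideal.sum_mem _ fun i _ => this i

variable (n)

variable {n}

lemma monomial_mem_mIdeal_pow {M : ℕ} {α : Fin n →₀ ℕ} (h : M ≤ deg α) (c : K) :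
    MvPowerSeries.monomial α c ∈ (mIdeal K n) ^ M := by
  classical
  apply Iord_le_mIdeal_pow
  intro β hβ
  rw [coeff_monomial, if_neg]
  intro hβα
  subst hβα
  omega

variable (n)

lemma mem_closedAdjoin_iff {S : Set (MvPowerSeries (Fin n) K)} {f : MvPowerSeries (Fin n) K} :
    f ∈ closedAdjoin K n S ↔ ∀ N : ℕ, ∃ g ∈ Algebra.adjoin K S, f - g ∈ (mIdeal K n) ^ N :=
  Iff.rfl

lemma subset_closedAdjoin (S : Set (MvPowerSeries (Fin n) K)) :
    S ⊆ ↑(closedAdjoin K n S) := fun g hg => by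
  intro N
  exact ⟨g, Algebra.subset_adjoin hg, by simp⟩

lemma closedAdjoin_le {S T : Set (MvPowerSeries (Fin n) K)}
    (h : S ⊆ ↑(closedAdjoin K n T)) : closedAdjoin K n S ≤ closedAdjoin K n T := by
  intro f hf N
  obtain ⟨g, hg, hfg⟩ := hf N
  obtain ⟨p, hp, hgp⟩ := (Algebra.adjoin_le h hg : g ∈ closedAdjoin K n T) N
  refine ⟨p, hp, ?_⟩
  have := Ideal.add_mem _ hfg hgp
  rwa [sub_add_sub_cancel] at this

lemma nu_zero (a : Fin n → ℝ) : nu K n a (0 : MvPowerSeries (Fin n) K) = ⊤ := by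
  have : supp K n (0 : MvPowerSeries (Fin n) K) = ∅ := by
    ext α; simp [supp]
  rw [nu, this, Set.image_empty, sInf_empty]

lemma nu_le (a : Fin n → ℝ) {f : MvPowerSeries (Fin n) K} {α : Fin n →₀ ℕ}
    (hα : α ∈ supp K n f) : nu K n a f ≤ ((weight n a α : ℝ) : EReal) :=
  sInf_le ⟨α, hα, rfl⟩

lemma nu_ne_top (a : Fin n → ℝ) {f : MvPowerSeries (Fin n) K} (hf : f ≠ 0) :
    nu K n a f ≠ ⊤ := by
  have : ∃ α, MvPowerSeries.coeff α f ≠ 0 := by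
    by_contra h
    push_neg at h
    exact hf (MvPowerSeries.ext h)
  obtain ⟨α, hα⟩ := this
  exact ne_top_of_le_ne_top (EReal.coe_ne_top _) (nu_le K n a hα)

lemma coeff_initialForm (a : Fin n → ℝ) (f : MvPowerSeries (Fin n) K) (α : Fin n →₀ ℕ) :
    MvPowerSeries.coeff α (initialForm K n a f) =
      if ((weight n a α : ℝ) : EReal) = nu K n a f then MvPowerSeries.coeff α f else 0 := by
  classical
  rw [MvPowerSeries.coeff_apply]
  simp [initialForm]

lemma supp_monomial {α : Fin n →₀ ℕ} {c : K} (hc : c ≠ 0) :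
    supp K n (MvPowerSeries.monomial α c) = {α} := by
  classical
  ext β
  simp only [supp, Set.mem_setOf_eq, coeff_monomial, Set.mem_singleton_iff]
  split
  · next h => simp [h, hc]
  · next h => simp [h]

lemma nu_monomial (a : Fin n → ℝ) {α : Fin n →₀ ℕ} {c : K} (hc : c ≠ 0) :
    nu K n a (MvPowerSeries.monomial α c) = ((weight n a α : ℝ) : EReal) := by
  rw [nu, supp_monomial K n hc, Set.image_singleton, csInf_singleton]

lemma initialForm_monomial (a : Fin n → ℝ) {α : Fin n →₀ ℕ} {c : K} (hc : c ≠ 0) :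
    initialForm K n a (MvPowerSeries.monomial α c) = MvPowerSeries.monomial α c := by
  classical
  ext β
  rw [coeff_initialForm, nu_monomial K n a hc]
  by_cases hβ : β = α
  · subst hβ
    rw [if_pos rfl]
  · rw [coeff_monomial, if_neg hβ]
    split <;> rfl

lemma monomial_one_ne_zero (α : Fin n →₀ ℕ) :
    (MvPowerSeries.monomial α (1 : K)) ≠ 0 := by
  intro h
  have := MvPowerSeries.coeff_monomial_same (R := K) α (1 : K)
  rw [h, map_zero] at this
  exact (one_ne_zero : (1 : K) ≠ 0) this.symm


lemma weight_eq_nu_iff (a : Fin n → ℝ) {p : MvPowerSeries (Fin n) K}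
    (hfin : (supp K n p).Finite) {α : Fin n →₀ ℕ} (hα : α ∈ supp K n p) :
    (((weight n a α : ℝ) : EReal) = nu K n a p) ↔
      ∀ β ∈ supp K n p, weight n a α ≤ weight n a β := by
  obtain ⟨α₀, h₀, hmin⟩ := Set.exists_min_image (supp K n p) (weight n a) hfin ⟨α, hα⟩
  have hnu : nu K n a p = ((weight n a α₀ : ℝ) : EReal) := by
    refine le_antisymm (nu_le K n a h₀) (le_sInf ?_)
    rintro x ⟨β, hβ, rfl⟩
    exact EReal.coe_le_coe_iff.2 (hmin β hβ)
  rw [hnu]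
  constructor
  · intro h β hβ
    have : weight n a α = weight n a α₀ := EReal.coe_eq_coe_iff.1 h
    exact this ▸ hmin β hβ
  · intro h
    exact EReal.coe_eq_coe_iff.2 (le_antisymm (h α₀ h₀) (hmin α hα))

lemma initialForm_eq_of_rel (N : ℕ) (a a' : Fin n → ℝ)
    (hrel : ∀ α β : Fin n →₀ ℕ, deg α < N → deg β < N →
      (weight n a α ≤ weight n a β ↔ weight n a' α ≤ weight n a' β))
    {p : MvPowerSeries (Fin n) K}
    (hpsupp : ∀ α, N ≤ deg α → MvPowerSeries.coeff α p = 0) :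
    initialForm K n a p = initialForm K n a' p := by
  classical
  have hD : ∀ α ∈ supp K n p, deg α < N := by
    intro α hα
    by_contra h
    exact hα (hpsupp α (le_of_not_gt h))
  obtain ⟨T, hT⟩ := exists_finset_deg_lt n N
  have hfin : (supp K n p).Finite :=
    Set.Finite.subset T.finite_toSet (fun α hα => hT α (hD α hα))
  ext β
  rw [coeff_initialForm, coeff_initialForm]
  by_cases hβ : MvPowerSeries.coeff β p = 0
  · split <;> split <;> simp [hβ]
  · have hβs : β ∈ supp K n p := hβ
    have h1 := weight_eq_nu_iff K n a hfin hβs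
    have h2 := weight_eq_nu_iff K n a' hfin hβs
    by_cases hc : ((weight n a β : ℝ) : EReal) = nu K n a p
    · rw [if_pos hc, if_pos (h2.mpr (fun γ hγ =>
        (hrel β γ (hD β hβs) (hD γ hγ)).1 (h1.mp hc γ hγ)))]
    · rw [if_neg hc, if_neg]
      intro hc'
      exact hc (h1.mpr (fun γ hγ => (hrel β γ (hD β hβs) (hD γ hγ)).2 (h2.mp hc' γ hγ)))

lemma pow_le_inAlgebra (A : Subalgebra K (MvPowerSeries (Fin n) K)) (a' : Fin n → ℝ) (N : ℕ)
    (hmN : ∀ z ∈ (mIdeal K n) ^ N, z ∈ A) :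
    ∀ z ∈ (mIdeal K n) ^ N, z ∈ inAlgebra K n a' ↑A := by
  classical
  intro z hz M
  obtain ⟨T, hT⟩ := exists_finset_deg_lt n M
  have hzI : ∀ α, deg α < N → MvPowerSeries.coeff α z = 0 := mIdeal_pow_le_Iord K N hz
  refine ⟨∑ α ∈ T, MvPowerSeries.monomial α (MvPowerSeries.coeff α z), ?_, ?_⟩
  · apply Subalgebra.sum_mem
    intro α _
    by_cases hc : MvPowerSeries.coeff α z = 0
    · rw [hc, map_zero]
      exact Subalgebra.zero_mem _
    · have hdeg : N ≤ deg α := by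
        by_contra h
        exact hc (hzI α (lt_of_not_ge h))
      have hxA : (MvPowerSeries.monomial α (1 : K)) ∈ A :=
        hmN _ (monomial_mem_mIdeal_pow K hdeg 1)
      have hxS : MvPowerSeries.monomial α (1 : K) ∈
          {g | ∃ f ∈ (A : Set (MvPowerSeries (Fin n) K)), f ≠ 0 ∧ initialForm K n a' f = g} :=
        ⟨MvPowerSeries.monomial α (1 : K), hxA, monomial_one_ne_zero K n α,
          initialForm_monomial K n a' (one_ne_zero : (1 : K) ≠ 0)⟩
      have heq : MvPowerSeries.monomial α (MvPowerSeries.coeff α z) =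
          (MvPowerSeries.coeff α z) • MvPowerSeries.monomial α (1 : K) := by
        calc MvPowerSeries.monomial α (MvPowerSeries.coeff α z)
            = MvPowerSeries.monomial α ((MvPowerSeries.coeff α z) • (1 : K)) := by
              rw [smul_eq_mul (α := K), mul_one]
          _ = (MvPowerSeries.coeff α z) • MvPowerSeries.monomial α (1 : K) :=
              (MvPowerSeries.monomial α).map_smul _ _
      rw [heq]
      exact Subalgebra.smul_mem _ (Algebra.subset_adjoin hxS) _
  · apply Iord_le_mIdeal_pow
    intro β hβ
    rw [map_sub, map_sum]
    have : ∑ α ∈ T, MvPowerSeries.coeff β (MvPowerSeries.monomial α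
        (MvPowerSeries.coeff α z)) = if β ∈ T then MvPowerSeries.coeff β z else 0 := by
      classical
      simp only [coeff_monomial]
      exact Finset.sum_ite_eq T β (fun α => MvPowerSeries.coeff α z)
    rw [this, if_pos (hT β hβ), sub_self]


set_option synthInstance.maxHeartbeats 1000000 in
set_option maxHeartbeats 1000000 in
lemma exists_pow_le (S : Set (MvPowerSeries (Fin n) K))
    (A : Subalgebra K (MvPowerSeries (Fin n) K))
    (hA : A = closedAdjoin K n S) (hlen : FiniteColength K n A) :
    ∃ N : ℕ, ∀ z ∈ (mIdeal K n) ^ N, z ∈ A := by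
  haveI hart : IsArtinian A (MvPowerSeries (Fin n) K ⧸
      LinearMap.range (Algebra.linearMap A (MvPowerSeries (Fin n) K))) :=
    (isFiniteLength_iff_isNoetherian_isArtinian.mp hlen).2
  set π := (LinearMap.range (Algebra.linearMap A (MvPowerSeries (Fin n) K))).mkQ with hπ
  have hmono : ∀ k l : ℕ, k ≤ l →
      Submodule.map π (((mIdeal K n) ^ l).restrictScalars A) ≤
        Submodule.map π (((mIdeal K n) ^ k).restrictScalars A) := by
    intro k l hkl
    apply Submodule.map_mono
    intro x hx
    exact Ideal.pow_le_pow_right hkl hx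
  set c : ℕ →o (Submodule A (MvPowerSeries (Fin n) K ⧸
      LinearMap.range (Algebra.linearMap A (MvPowerSeries (Fin n) K))))ᵒᵈ :=
    ⟨fun k => Submodule.map π (((mIdeal K n) ^ k).restrictScalars A),
      fun k l hkl => hmono k l hkl⟩ with hc
  obtain ⟨N, hN⟩ := IsArtinian.monotone_stabilizes c
  refine ⟨N, ?_⟩
  intro z hz
  rw [hA]
  intro M
  have h0 : π z ∈ OrderDual.ofDual (c N) := ⟨z, hz, rfl⟩
  have hEq : OrderDual.ofDual (c N) = OrderDual.ofDual (c (N + M)) :=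
    congrArg _ (hN (N + M) le_self_add)
  have h1 : π z ∈ OrderDual.ofDual (c (N + M)) := hEq ▸ h0
  obtain ⟨t, ht, hπt⟩ := h1
  have hker : z - t ∈ LinearMap.range (Algebra.linearMap A (MvPowerSeries (Fin n) K)) := by
    have : π (z - t) = 0 := by rw [map_sub, hπt, sub_self]
    rwa [hπ, ← LinearMap.mem_ker, Submodule.ker_mkQ] at this
  obtain ⟨w, hw⟩ := hker
  have hwA : z - t ∈ A := by
    have : (w : MvPowerSeries (Fin n) K) = z - t := hw
    rw [← this]
    exact w.2
  rw [hA] at hwA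
  obtain ⟨g, hg, hzg⟩ := hwA M
  refine ⟨g, hg, ?_⟩
  have h2 : z - g = (z - t - g) + t := by ring
  rw [h2]
  exact Ideal.add_mem _ hzg (Ideal.pow_le_pow_right le_add_self ht)


lemma initialForm_mem (A : Subalgebra K (MvPowerSeries (Fin n) K)) (N : ℕ)
    (hmN : ∀ z ∈ (mIdeal K n) ^ N, z ∈ A) (a a' : Fin n → ℝ)
    (hrel : ∀ α β : Fin n →₀ ℕ, deg α < N → deg β < N →
      (weight n a α ≤ weight n a β ↔ weight n a' α ≤ weight n a' β))
    {f : MvPowerSeries (Fin n) K} (hfA : f ∈ A) (hf0 : f ≠ 0) :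
    initialForm K n a f ∈ inAlgebra K n a' ↑A := by
  classical
  have hm' := pow_le_inAlgebra K n A a' N hmN
  set p : MvPowerSeries (Fin n) K :=
    fun α => if deg α < N then MvPowerSeries.coeff α f else 0 with hp
  have hpcoeff : ∀ α, MvPowerSeries.coeff α p =
      if deg α < N then MvPowerSeries.coeff α f else 0 := fun α => rfl
  have htI : f - p ∈ Iord K n N := by
    intro α hα
    rw [map_sub, hpcoeff, if_pos hα, sub_self]
  have htA : f - p ∈ A := hmN _ (Iord_le_mIdeal_pow K N htI)
  have hpA : p ∈ A := by
    have := A.sub_mem hfA htA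
    simpa using this
  have hpN : ∀ α, N ≤ deg α → MvPowerSeries.coeff α p = 0 := by
    intro α hα
    rw [hpcoeff, if_neg (not_lt.2 hα)]
  -- support splitting
  have hsupp : supp K n f = supp K n p ∪ supp K n (f - p) := by
    ext α
    simp only [supp, Set.mem_setOf_eq, Set.mem_union, map_sub, hpcoeff]
    by_cases h : deg α < N
    · simp [h]
    · simp [h]
  have hνsplit : nu K n a f = nu K n a p ⊓ nu K n a (f - p) := by
    rw [nu, hsupp, Set.image_union, sInf_union]
    rfl
  by_cases hcase : nu K n a p = nu K n a f
  · -- main case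
    have hp0 : p ≠ 0 := by
      intro h
      rw [h, nu_zero] at hcase
      exact nu_ne_top K n a hf0 hcase.symm
    have key : initialForm K n a p = initialForm K n a' p :=
      initialForm_eq_of_rel K n N a a' hrel hpN
    have hinp : initialForm K n a p ∈ inAlgebra K n a' ↑A := by
      rw [key]
      exact subset_closedAdjoin K n _ ⟨p, hpA, hp0, rfl⟩
    have hdiff : initialForm K n a f - initialForm K n a p ∈ Iord K n N := by
      intro α hα
      rw [map_sub, coeff_initialForm, coeff_initialForm, hcase, hpcoeff, if_pos hα]
      split <;> simp
    have : initialForm K n a f =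
        initialForm K n a p + (initialForm K n a f - initialForm K n a p) := by ring
    rw [this]
    exact Subalgebra.add_mem _ hinp (hm' _ (Iord_le_mIdeal_pow K N hdiff))
  · -- initial form has no low-degree part
    have hle : nu K n a f ≤ nu K n a p := hνsplit ▸ inf_le_left
    have hlt : nu K n a f < nu K n a p := hle.lt_of_ne (fun h => hcase h.symm)
    have hI : initialForm K n a f ∈ Iord K n N := by
      intro α hα
      rw [coeff_initialForm]
      split
      · next hcond =>
        by_contra hne
        have hαp : α ∈ supp K n p := by
          simp only [supp, Set.mem_setOf_eq, hpcoeff, if_pos hα]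
          exact hne
        have h2 : nu K n a p ≤ nu K n a f := hcond ▸ nu_le K n a hαp
        exact (not_le.2 hlt) h2
      · rfl
    exact hm' _ (Iord_le_mIdeal_pow K N hI)


lemma inAlgebra_congr (A : Subalgebra K (MvPowerSeries (Fin n) K)) (N : ℕ)
    (hmN : ∀ z ∈ (mIdeal K n) ^ N, z ∈ A) (a a' : Fin n → ℝ)
    (hrel : ∀ α β : Fin n →₀ ℕ, deg α < N → deg β < N →
      (weight n a α ≤ weight n a β ↔ weight n a' α ≤ weight n a' β)) :
    inAlgebra K n a ↑A = inAlgebra K n a' ↑A := by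
  have h1 : ∀ (b b' : Fin n → ℝ),
      (∀ α β : Fin n →₀ ℕ, deg α < N → deg β < N →
        (weight n b α ≤ weight n b β ↔ weight n b' α ≤ weight n b' β)) →
      inAlgebra K n b ↑A ≤ inAlgebra K n b' ↑A := by
    intro b b' hbb
    apply closedAdjoin_le
    rintro g ⟨f, hfA, hf0, rfl⟩
    exact initialForm_mem K n A N hmN b b' hbb hfA hf0
  exact le_antisymm (h1 a a' hrel) (h1 a' a (fun α β hα hβ => (hrel α β hα hβ).symm))

theorem inAlgebra_finite'
    (A : Subalgebra K (MvPowerSeries (Fin n) K)) (S : Set (MvPowerSeries (Fin n) K))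
    (hA : A = closedAdjoin K n S)
    (hlen : FiniteColength K n A) :
    {B : Subalgebra K (MvPowerSeries (Fin n) K) | ∃ a : Fin n → ℝ, (∀ i, 0 < a i) ∧
      B = inAlgebra K n a (A : Set (MvPowerSeries (Fin n) K))}.Finite := by
  classical
  obtain ⟨N, hmN⟩ := exists_pow_le K n S A hA hlen
  obtain ⟨T, hT⟩ := exists_finset_deg_lt n N
  set R : (Fin n → ℝ) → Set ((Fin n →₀ ℕ) × (Fin n →₀ ℕ)) := fun a =>
    {q | deg q.1 < N ∧ deg q.2 < N ∧ weight n a q.1 ≤ weight n a q.2} with hR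
  have hkey : ∀ a a' : Fin n → ℝ, R a = R a' →
      inAlgebra K n a ↑A = inAlgebra K n a' ↑A := by
    intro a a' h
    apply inAlgebra_congr K n A N hmN
    intro α β hα hβ
    constructor
    · intro hw
      have : (α, β) ∈ R a := ⟨hα, hβ, hw⟩
      rw [h] at this
      exact this.2.2
    · intro hw
      have : (α, β) ∈ R a' := ⟨hα, hβ, hw⟩
      rw [← h] at this
      exact this.2.2
  set Φ : Set ((Fin n →₀ ℕ) × (Fin n →₀ ℕ)) → Subalgebra K (MvPowerSeries (Fin n) K) :=
    fun s => if h : ∃ a : Fin n → ℝ, R a = s then inAlgebra K n h.choose ↑A else ⊥ with hΦ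
  have hfin : {s : Set ((Fin n →₀ ℕ) × (Fin n →₀ ℕ)) | s ⊆ (↑T : Set (Fin n →₀ ℕ)) ×ˢ (↑T : Set (Fin n →₀ ℕ))}.Finite :=
    Set.Finite.finite_subsets (Set.Finite.prod T.finite_toSet T.finite_toSet)
  apply Set.Finite.subset (Set.Finite.image Φ hfin)
  rintro B ⟨a, _, rfl⟩
  refine ⟨R a, ?_, ?_⟩
  · rintro ⟨α, β⟩ ⟨h1, h2, _⟩
    exact ⟨hT α h1, hT β h2⟩
  · have hex : ∃ a0 : Fin n → ℝ, R a0 = R a := ⟨a, rfl⟩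
    rw [hΦ]
    simp only [dif_pos hex]
    exact hkey _ _ hex.choose_spec

/-- If the length of `F/A` is finite, the set `{in(A,a) : a ∈ (ℝ_{>0})^n}`
of subalgebras of `F` is finite. -/
theorem inAlgebra_finite
    (r : (Fin n →₀ ℕ) → (Fin n →₀ ℕ) → Prop) (hr : IsWellOrder (Fin n →₀ ℕ) r)
    (hradd : ∀ α β γ : Fin n →₀ ℕ, r α β → r (α + γ) (β + γ))
    (s : ℕ) (f : Fin s → MvPowerSeries (Fin n) K) (hf : ∀ i, f i ≠ 0)
    (A : Subalgebra K (MvPowerSeries (Fin n) K)) (hA : A = closedAdjoin K n (Set.range f))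
    (hlen : FiniteColength K n A) :
    {B : Subalgebra K (MvPowerSeries (Fin n) K) | ∃ a : Fin n → ℝ, (∀ i, 0 < a i) ∧
      B = inAlgebra K n a (A : Set (MvPowerSeries (Fin n) K))}.Finite :=
  inAlgebra_finite' K n A (Set.range f) hA hlen

end CanonicalFan
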